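/- arXiv:1902.01029 — 3 statements merged into one kernel-verified Lean document; each statement's English description precedes it below -/
import Mathlib

section
/- Let Γ be a finite simple graph and let v be a vertex of Γ. Then the right-angled Coxeter group W_{D_vΓ} of the double of Γ over v is isomorphic to a subgroup of index two in the right-angled Coxeter group W_Γ. -/
open SimpleGraph

/-! ### Right-angled Coxeter groups -/

/-- The relators of the right-angled Coxeter group of a graph `G`: the square of each
generator, and a commuting relator `s * t * (t * s)⁻¹` for each edge of `G`. -/
def racgRels {V : Type} (G : SimpleGraph V) : Set (FreeGroup V) :=
  {r | (∃ s : V, r = FreeGroup.of s * FreeGroup.of s) ∨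
    (∃ s t : V, G.Adj s t ∧
      r = (FreeGroup.of s * FreeGroup.of t) * (FreeGroup.of t * FreeGroup.of s)⁻¹)}

/-- The right-angled Coxeter group of a graph. -/
abbrev RACG {V : Type} (G : SimpleGraph V) := PresentedGroup (racgRels G)

/-! ### The double of a graph over a vertex -/

/-- Vertices of the double of `G` over `v`: one vertex for each vertex of the link of `v`,
and a pair of vertices for each vertex outside the closed star of `v`. -/
def DoubleVert {V : Type} (G : SimpleGraph V) (v : V) : Type :=
  {u : V // G.Adj v u} ⊕ ({u : V // u ≠ v ∧ ¬ G.Adj v u} × Bool)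

namespace DoubleVert

/-- The projection of a vertex of the double to the original graph. -/
def toV {V : Type} {G : SimpleGraph V} {v : V} : DoubleVert G v → V :=
  Sum.elim Subtype.val fun p => p.1.1

/-- The copy (none for link vertices) in which a vertex of the double lives. -/
def copy {V : Type} {G : SimpleGraph V} {v : V} : DoubleVert G v → Option Bool :=
  Sum.elim (fun _ => none) fun p => some p.2

instance {V : Type} [Finite V] {G : SimpleGraph V} {v : V} : Finite (DoubleVert G v) := by
  unfold DoubleVert; infer_instance

end DoubleVert

/-- The double `D_v G` of a graph `G` over the vertex `v`: two copies of `G` minus the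
open star of `v`, glued along the link of `v`. -/
def Double {V : Type} (G : SimpleGraph V) (v : V) : SimpleGraph (DoubleVert G v) where
  Adj a b := G.Adj a.toV b.toV ∧ (a.copy = none ∨ b.copy = none ∨ a.copy = b.copy)
  symm := by
    constructor
    rintro a b ⟨h1, h2⟩
    refine ⟨h1.symm, ?_⟩
    tauto
  loopless := ⟨fun a h => G.loopless.irrefl _ h.1⟩

/-! ### Bundled finite graphs, doubling moves, and subdivisions -/

/-- A bundled finite simple graph. -/
structure FinGraph : Type 1 where
  V : Type
  finite : Finite V
  graph : SimpleGraph V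

attribute [instance] FinGraph.finite

/-- `H` is obtained from `G` by doubling over some vertex (up to isomorphism). -/
def DoubleMove (G H : FinGraph) : Prop :=
  ∃ v : G.V, Nonempty (H.graph ≃g Double G.graph v)

/-- `DoublingSeq n G H` : `H` is obtained from `G` by a sequence of `n` doubling moves. -/
inductive DoublingSeq : ℕ → FinGraph → FinGraph → Prop
  | refl (G : FinGraph) : DoublingSeq 0 G G
  | step {n : ℕ} {G G' G'' : FinGraph} :
      DoublingSeq n G G' → DoubleMove G' G'' → DoublingSeq (n + 1) G G''

/-- The graph obtained from `G` by subdividing the edge between `u` and `w`: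
the new vertex is `none`. -/
def subdivideEdge {V : Type} (G : SimpleGraph V) (u w : V) : SimpleGraph (Option V) where
  Adj a b :=
    match a, b with
    | some a, some b => G.Adj a b ∧ ¬(a = u ∧ b = w) ∧ ¬(a = w ∧ b = u)
    | some a, none => a = u ∨ a = w
    | none, some b => b = u ∨ b = w
    | none, none => False
  symm := by
    constructor
    rintro (_ | a) (_ | b) h
    · exact h
    · exact h
    · exact h
    · exact ⟨h.1.symm, fun hc => h.2.2 ⟨hc.2, hc.1⟩, fun hc => h.2.1 ⟨hc.2, hc.1⟩⟩
  loopless := by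
    constructor
    rintro (_ | a) h
    · exact h
    · exact G.loopless.irrefl a h.1

/-- One subdivision step between bundled graphs. -/
def SubdivStep (G H : FinGraph) : Prop :=
  ∃ u w : G.V, G.graph.Adj u w ∧ Nonempty (H.graph ≃g subdivideEdge G.graph u w)

/-- `G` is obtained from `H` by a finite (possibly empty) sequence of edge subdivisions. -/
def IsSubdivisionOf (H G : FinGraph) : Prop := Relation.ReflTransGen SubdivStep H G

/-- The complete bipartite graph `K_{3,3}` as a bundled graph. -/
def K33Graph : FinGraph := ⟨Fin 3 ⊕ Fin 3, inferInstance, completeBipartiteGraph (Fin 3) (Fin 3)⟩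

/-- The complete graph `K_5` as a bundled graph. -/
def K5Graph : FinGraph := ⟨Fin 5, inferInstance, completeGraph (Fin 5)⟩

/-- The subgraph `Λ` of `G` is (isomorphic to) a subdivision of the bundled graph `H`. -/
def IsSubdivCopy (H : FinGraph) {V : Type} (G : SimpleGraph V) (Λ : G.Subgraph) : Prop :=
  ∃ H' : FinGraph, IsSubdivisionOf H H' ∧ Nonempty (H'.graph ≃g Λ.coe)

/-- `G` contains a subgraph which is a subdivision of `H`. -/
def ContainsSubdivOf (H : FinGraph) {V : Type} (G : SimpleGraph V) : Prop :=
  ∃ Λ : G.Subgraph, IsSubdivCopy H G Λ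

/-- `Λ` is a `K_{3,3}` subdivision in `G`. -/
def IsK33Sub {V : Type} (G : SimpleGraph V) (Λ : G.Subgraph) : Prop := IsSubdivCopy K33Graph G Λ

/-- `Λ` is a `K_5` subdivision in `G`. -/
def IsK5Sub {V : Type} (G : SimpleGraph V) (Λ : G.Subgraph) : Prop := IsSubdivCopy K5Graph G Λ

/-! ### Essential vertices, branches, bad edges -/

/-- The valence of `v` in the subgraph `Λ`. -/
noncomputable def essDeg {V : Type} {G : SimpleGraph V} (Λ : G.Subgraph) (v : V) : ℕ :=
  (Λ.neighborSet v).ncard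

/-- A vertex is `Λ`-essential if its valence in `Λ` is at least 3. -/
def Essential {V : Type} {G : SimpleGraph V} (Λ : G.Subgraph) (v : V) : Prop := 3 ≤ essDeg Λ v

/-- A vertex is `Λ`-non-essential if its valence in `Λ` is 2. -/
def NonEssential {V : Type} {G : SimpleGraph V} (Λ : G.Subgraph) (v : V) : Prop := essDeg Λ v = 2

/-- A branch of `Λ`: an embedded path in `Λ` between `Λ`-essential vertices whose interior
contains no `Λ`-essential vertex. -/
structure IsBranch {V : Type} {G : SimpleGraph V} (Λ : G.Subgraph) {s t : V}
    (p : G.Walk s t) : Prop where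
  isPath : p.IsPath
  pos : 0 < p.length
  mem_edges : ∀ e ∈ p.edges, e ∈ Λ.edgeSet
  ess_fst : Essential Λ s
  ess_snd : Essential Λ t
  interior : ∀ v ∈ p.support, v ≠ s → v ≠ t → ¬ Essential Λ v

/-- A bad edge of `Λ`: an edge of `G` with both endpoints in `Λ` which is not an edge of `Λ`. -/
def IsBadEdge {V : Type} (G : SimpleGraph V) (Λ : G.Subgraph) (e : Sym2 V) : Prop :=
  e ∈ G.edgeSet ∧ (∀ v ∈ e, v ∈ Λ.verts) ∧ e ∉ Λ.edgeSet

/-- The set of bad edges of `Λ`. -/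
def badEdgeSet {V : Type} (G : SimpleGraph V) (Λ : G.Subgraph) : Set (Sym2 V) :=
  {e | IsBadEdge G Λ e}

/-- `B(Λ)`, the number of bad edges of `Λ`. -/
noncomputable def badCount {V : Type} (G : SimpleGraph V) (Λ : G.Subgraph) : ℕ :=
  (badEdgeSet G Λ).ncard

/-- The number of edges of a subgraph. -/
noncomputable def numEdges {V : Type} {G : SimpleGraph V} (Λ : G.Subgraph) : ℕ :=
  Λ.edgeSet.ncard

/-- `Λ` is a `K_{3,3}` subdivision which is shortest among all `K_{3,3}` subdivisions in `G`
having at most `B(Λ)` bad edges. -/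
def ShortestK33 {V : Type} (G : SimpleGraph V) (Λ : G.Subgraph) : Prop :=
  IsK33Sub G Λ ∧ ∀ Λ₂ : G.Subgraph, IsK33Sub G Λ₂ → badCount G Λ₂ ≤ badCount G Λ →
    numEdges Λ ≤ numEdges Λ₂

/-- A vertex partition `{a,b,c}`, `{x,y,z}` for a `K_{3,3}` subdivision `Λ`: six distinct
vertices which are exactly the `Λ`-essential vertices, with a branch of `Λ` joining each of
`a, b, c` to each of `x, y, z`. -/
structure IsVertexPartition {V : Type} {G : SimpleGraph V} (Λ : G.Subgraph)
    (a b c x y z : V) : Prop where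
  nodup : ([a, b, c, x, y, z] : List V).Nodup
  ess_iff : ∀ v, Essential Λ v ↔ v ∈ ({a, b, c, x, y, z} : Set V)
  branches : ∀ s ∈ ({a, b, c} : Set V), ∀ t ∈ ({x, y, z} : Set V),
    ∃ p : G.Walk s t, IsBranch Λ p

/-- `Λ` is an induced subgraph of `G`. -/
def IsInducedSub {V : Type} (G : SimpleGraph V) (Λ : G.Subgraph) : Prop :=
  ∀ e ∈ G.edgeSet, (∀ v ∈ e, v ∈ Λ.verts) → e ∈ Λ.edgeSet

/-- The induced subgraph on `Λ` consists of `Λ` plus exactly the edges `x-y` and `y-z`. -/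
def FormTwoExtra {V : Type} (G : SimpleGraph V) (Λ : G.Subgraph) (x y z : V) : Prop :=
  badEdgeSet G Λ = {s(x, y), s(y, z)}

/-- The induced subgraph on `Λ` consists of `Λ` plus exactly the edges `x-y`, `y-z`, `a-b`,
`b-c`, and the branches `[a,y]`, `[c,y]`, `[b,x]`, `[b,z]` are single edges. -/
def FormFourExtra {V : Type} (G : SimpleGraph V) (Λ : G.Subgraph) (a b c x y z : V) : Prop :=
  badEdgeSet G Λ = {s(x, y), s(y, z), s(a, b), s(b, c)} ∧
    (∀ p : G.Walk a y, IsBranch Λ p → p.length = 1) ∧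
    (∀ p : G.Walk c y, IsBranch Λ p → p.length = 1) ∧
    (∀ p : G.Walk b x, IsBranch Λ p → p.length = 1) ∧
    (∀ p : G.Walk b z, IsBranch Λ p → p.length = 1)

/-- `Λ` is a `K_{3,3}` subdivision which is either induced, or induces one of the two special
graphs of Dani–Haulmark–Walsh. -/
def GoodK33Outcome {V : Type} (G : SimpleGraph V) (Λ : G.Subgraph) : Prop :=
  IsK33Sub G Λ ∧ (IsInducedSub G Λ ∨
    ∃ a b c x y z : V, IsVertexPartition Λ a b c x y z ∧
      (FormTwoExtra G Λ x y z ∨ FormFourExtra G Λ a b c x y z))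

/-! ### Möbius ladders and separating sets -/

/-- The Möbius ladder `M_n`, on vertex set `ZMod (2 * n)`: the cycle edges `i — i+1`
together with the rungs `i — i+n`. -/
def MobiusLadder (n : ℕ) : SimpleGraph (ZMod (2 * n)) where
  Adj i j := i ≠ j ∧ (i = j + 1 ∨ j = i + 1 ∨ i = j + (n : ZMod (2 * n)))
  symm := by
    constructor
    rintro i j ⟨hne, h⟩
    refine ⟨hne.symm, ?_⟩
    rcases h with h | h | h
    · exact Or.inr (Or.inl h)
    · exact Or.inl h
    · refine Or.inr (Or.inr ?_)
      have hnn : (n : ZMod (2 * n)) + (n : ZMod (2 * n)) = 0 := by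
        have h2 : ((2 * n : ℕ) : ZMod (2 * n)) = 0 := ZMod.natCast_self _
        push_cast at h2
        linear_combination h2
      rw [h, add_assoc, hnn, add_zero]
  loopless := ⟨fun i h => h.1 rfl⟩

/-- `S` separates `G` if deleting `S` yields a disconnected graph. -/
def Separates {V : Type} (G : SimpleGraph V) (S : Set V) : Prop :=
  ¬ (G.induce Sᶜ).Connected

/-! ### Auxiliary development for the doubling lemma -/

section RacgAux

variable {V : Type} {G : SimpleGraph V}

lemma racg_mk_rel {r : FreeGroup V} (hr : r ∈ racgRels G) :
    PresentedGroup.mk (racgRels G) r = 1 :=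
  (QuotientGroup.eq_one_iff r).mpr (Subgroup.subset_normalClosure hr)

lemma racg_sq (s : V) : (PresentedGroup.of s : RACG G) * PresentedGroup.of s = 1 := by
  have h := racg_mk_rel (G := G) (Or.inl ⟨s, rfl⟩)
  rwa [map_mul] at h

lemma racg_inv (s : V) : (PresentedGroup.of s : RACG G)⁻¹ = PresentedGroup.of s :=
  inv_eq_of_mul_eq_one_right (racg_sq s)

lemma racg_comm {s t : V} (h : G.Adj s t) :
    Commute (PresentedGroup.of s : RACG G) (PresentedGroup.of t) := by
  have h2 := racg_mk_rel (G := G) (Or.inr ⟨s, t, h, rfl⟩)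
  rw [map_mul, map_inv, map_mul, map_mul] at h2
  exact mul_inv_eq_one.mp h2

/-- Lift a map on generators satisfying the RACG relations to a homomorphism. -/
def racgLift {H : Type*} [Group H] (f : V → H) (h1 : ∀ s, f s * f s = 1)
    (h2 : ∀ s t, G.Adj s t → Commute (f s) (f t)) : RACG G →* H :=
  PresentedGroup.toGroup (f := f) (by
    rintro r (⟨s, rfl⟩ | ⟨s, t, hst, rfl⟩)
    · rw [map_mul, FreeGroup.lift_apply_of, h1]
    · rw [map_mul, map_inv, map_mul, map_mul, FreeGroup.lift_apply_of, FreeGroup.lift_apply_of,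
        mul_inv_eq_one]
      exact h2 s t hst)

@[simp] lemma racgLift_of {H : Type*} [Group H] (f : V → H) (h1) (h2) (x : V) :
    racgLift (G := G) f h1 h2 (PresentedGroup.of x) = f x :=
  PresentedGroup.toGroup.of _

lemma grp_sandwich {H : Type*} [Group H] (a b : H) (ha : a * a = 1) :
    a * (a * b * a) * a = b := by
  have h : a * (a * b * a) * a = (a * a) * b * (a * a) := by simp only [mul_assoc]
  rw [h, ha, one_mul, mul_one]

lemma grp_inv_sandwich {H : Type*} [Group H] (a b : H) (ha : a * a = 1) (hb : b * b = 1) :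
    (a * b * a) * (a * b * a) = 1 := by
  have h : (a * b * a) * (a * b * a) = a * (b * (a * a) * b) * a := by
    simp only [mul_assoc]
  rw [h, ha, mul_one, hb, mul_one, ha]

lemma racg_conj_form (v u : V) :
    (PresentedGroup.of v : RACG G) * PresentedGroup.of u * PresentedGroup.of v
      = MulAut.conj (PresentedGroup.of v) (PresentedGroup.of u) := by
  rw [MulAut.conj_apply, racg_inv]

end RacgAux

/-- A homomorphism from `Multiplicative (ZMod 2)` determined by an involution. -/
def powHomTwo {K : Type*} [Group K] (k : K) (hk : k * k = 1) : Multiplicative (ZMod 2) →* K :=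
  MonoidHom.mk' (fun x => k ^ (Multiplicative.toAdd x).val) (by
    intro a b
    have hk2 : k ^ 2 = 1 := by rw [pow_two, hk]
    have hmod : ∀ m : ℕ, k ^ m = k ^ (m % 2) := by
      intro m
      conv_lhs => rw [← Nat.div_add_mod m 2]
      rw [pow_add, pow_mul, hk2, one_pow, one_mul]
    have hadd : Multiplicative.toAdd (a * b) =
        Multiplicative.toAdd a + Multiplicative.toAdd b := rfl
    show k ^ (Multiplicative.toAdd (a * b)).val = _
    rw [hadd, ZMod.val_add, ← hmod, pow_add])

lemma powHomTwo_ofAdd_one {K : Type*} [Group K] (k : K) (hk : k * k = 1) :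
    powHomTwo k hk (Multiplicative.ofAdd (1 : ZMod 2)) = k := by
  show k ^ (1 : ZMod 2).val = k
  have h1 : (1 : ZMod 2).val = 1 := rfl
  rw [h1, pow_one]

lemma c2_cases (g : Multiplicative (ZMod 2)) :
    g = 1 ∨ g = Multiplicative.ofAdd (1 : ZMod 2) := by
  revert g; decide

lemma comm_inr_inl {N G : Type*} [Group N] [Group G] {φ : G →* MulAut N} (g : G) (n : N)
    (h : φ g n = n) :
    Commute (SemidirectProduct.inr g : N ⋊[φ] G) (SemidirectProduct.inl n) := by
  unfold Commute SemiconjBy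
  ext <;> simp [h]

lemma inr_inl_inr {N G : Type*} [Group N] [Group G] {φ : G →* MulAut N} (g : G)
    (hg : g * g = 1) (n : N) :
    (SemidirectProduct.inr g : N ⋊[φ] G) * SemidirectProduct.inl n *
      SemidirectProduct.inr g = SemidirectProduct.inl (φ g n) := by
  ext <;> simp [hg]

section DoubleAux

variable {V : Type} (G : SimpleGraph V) (v : V)

/-- The involution of the double swapping the two copies. -/
def dswap : DoubleVert G v → DoubleVert G v :=
  Sum.map id fun p => (p.1, !p.2)

lemma dswap_dswap (x : DoubleVert G v) : dswap G v (dswap G v x) = x := by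
  cases x with
  | inl u => rfl
  | inr p => simp [dswap]; rfl

lemma double_adj_inr_copy {p q} (h : (Double G v).Adj (Sum.inr p) (Sum.inr q)) :
    p.2 = q.2 := by
  simpa [DoubleVert.copy] using h.2

lemma dswap_adj {a b : DoubleVert G v} (h : (Double G v).Adj a b) :
    (Double G v).Adj (dswap G v a) (dswap G v b) := by
  have h1 := h.1
  rcases a with u | p <;> rcases b with w | q
  · exact ⟨h1, Or.inl rfl⟩
  · exact ⟨h1, Or.inl rfl⟩
  · exact ⟨h1, Or.inr (Or.inl rfl)⟩
  · refine ⟨h1, Or.inr (Or.inr ?_)⟩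
    have hc := double_adj_inr_copy G v h
    simp [dswap, DoubleVert.copy, hc]

/-- The copy-swapping homomorphism on the RACG of the double. -/
def sigmaHom : RACG (Double G v) →* RACG (Double G v) :=
  racgLift (fun x => PresentedGroup.of (dswap G v x)) (fun _ => racg_sq _)
    (fun _ _ hab => racg_comm (dswap_adj G v hab))

lemma sigmaHom_sigmaHom (x : RACG (Double G v)) : sigmaHom G v (sigmaHom G v x) = x := by
  have h : (sigmaHom G v).comp (sigmaHom G v) = MonoidHom.id _ :=
    PresentedGroup.ext fun y => by simp [sigmaHom, dswap_dswap]
  exact DFunLike.congr_fun h x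

/-- The copy-swapping automorphism. -/
def sigmaAut : MulAut (RACG (Double G v)) :=
  { toFun := sigmaHom G v
    invFun := sigmaHom G v
    left_inv := sigmaHom_sigmaHom G v
    right_inv := sigmaHom_sigmaHom G v
    map_mul' := map_mul (sigmaHom G v) }

lemma sigmaAut_of (x : DoubleVert G v) :
    sigmaAut G v (PresentedGroup.of x) = PresentedGroup.of (dswap G v x) := by
  show sigmaHom G v (PresentedGroup.of x) = PresentedGroup.of (dswap G v x)
  exact racgLift_of _ _ _ x

lemma sigmaAut_sq : sigmaAut G v * sigmaAut G v = 1 := by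
  ext x
  exact sigmaHom_sigmaHom G v x

/-- The action of `ZMod 2` on the RACG of the double. -/
def phiAct : Multiplicative (ZMod 2) →* MulAut (RACG (Double G v)) :=
  powHomTwo (sigmaAut G v) (sigmaAut_sq G v)

/-- The generator of the `ZMod 2` factor. -/
abbrev tGen : Multiplicative (ZMod 2) := Multiplicative.ofAdd (1 : ZMod 2)

lemma tGen_mul_tGen : tGen * tGen = 1 := by decide

lemma phiAct_tGen : phiAct G v tGen = sigmaAut G v :=
  powHomTwo_ofAdd_one _ _

/-- The map on generators for the double-to-original map. -/
def psiFun : DoubleVert G v → RACG G :=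
  Sum.elim (fun u => PresentedGroup.of u.1)
    (fun p => if p.2 then
        PresentedGroup.of v * PresentedGroup.of p.1.1 * PresentedGroup.of v
      else PresentedGroup.of p.1.1)

/-- The homomorphism from the RACG of the double to the RACG of the original graph. -/
def psiHom : RACG (Double G v) →* RACG G :=
  racgLift (psiFun G v)
    (by
      rintro (u | ⟨u, b⟩)
      · exact racg_sq _
      · cases b
        · exact racg_sq _
        · show (PresentedGroup.of v * PresentedGroup.of u.1 * PresentedGroup.of v) *
            (PresentedGroup.of v * PresentedGroup.of u.1 * PresentedGroup.of v) = 1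
          exact grp_inv_sandwich _ _ (racg_sq v) (racg_sq u.1))
    (by
      intro a b hab
      have hG := hab.1
      rcases a with u | p <;> rcases b with w | q
      · exact racg_comm hG
      · obtain ⟨w, cb⟩ := q
        cases cb
        · exact racg_comm hG
        · show Commute (PresentedGroup.of u.1)
            (PresentedGroup.of v * PresentedGroup.of w.1 * PresentedGroup.of v)
          exact ((racg_comm u.2.symm).mul_right (racg_comm hG)).mul_right
            (racg_comm u.2.symm)
      · obtain ⟨u, cb⟩ := p
        cases cb
        · exact racg_comm hG
        · show Commute
            (PresentedGroup.of v * PresentedGroup.of u.1 * PresentedGroup.of v)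
            (PresentedGroup.of w.1)
          exact (((racg_comm w.2.symm).mul_right (racg_comm hG.symm)).mul_right
            (racg_comm w.2.symm)).symm
      · obtain ⟨u, cb⟩ := p
        obtain ⟨w, cb'⟩ := q
        have hcc : cb = cb' := double_adj_inr_copy G v hab
        subst hcc
        cases cb
        · exact racg_comm hG
        · show Commute
            (PresentedGroup.of v * PresentedGroup.of u.1 * PresentedGroup.of v)
            (PresentedGroup.of v * PresentedGroup.of w.1 * PresentedGroup.of v)
          rw [racg_conj_form, racg_conj_form]
          exact (racg_comm hG).map (MulAut.conj (PresentedGroup.of v)).toMonoidHom)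

lemma psiHom_of (x : DoubleVert G v) :
    psiHom G v (PresentedGroup.of x) = psiFun G v x :=
  racgLift_of _ _ _ x

open Classical in
/-- The canonical vertex of the double associated to a vertex distinct from `v`. -/
noncomputable def toDoubleV (x : V) (hxv : x ≠ v) : DoubleVert G v :=
  if h : G.Adj v x then Sum.inl ⟨x, h⟩ else Sum.inr (⟨x, hxv, h⟩, false)

lemma toDoubleV_pos (x : V) (hxv : x ≠ v) (h : G.Adj v x) :
    toDoubleV G v x hxv = (Sum.inl ⟨x, h⟩ : DoubleVert G v) := dif_pos h

lemma toDoubleV_neg (x : V) (hxv : x ≠ v) (h : ¬ G.Adj v x) :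
    toDoubleV G v x hxv = (Sum.inr (⟨x, hxv, h⟩, false) : DoubleVert G v) := dif_neg h

lemma toDoubleV_adj {s t : V} (hst : G.Adj s t) (hs : s ≠ v) (ht : t ≠ v) :
    (Double G v).Adj (toDoubleV G v s hs) (toDoubleV G v t ht) := by
  by_cases hs' : G.Adj v s <;> by_cases ht' : G.Adj v t
  · rw [toDoubleV_pos G v s hs hs', toDoubleV_pos G v t ht ht']
    exact ⟨hst, Or.inl rfl⟩
  · rw [toDoubleV_pos G v s hs hs', toDoubleV_neg G v t ht ht']
    exact ⟨hst, Or.inl rfl⟩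
  · rw [toDoubleV_neg G v s hs hs', toDoubleV_pos G v t ht ht']
    exact ⟨hst, Or.inr (Or.inl rfl)⟩
  · rw [toDoubleV_neg G v s hs hs', toDoubleV_neg G v t ht ht']
    exact ⟨hst, Or.inr (Or.inr rfl)⟩

lemma psiFun_toDoubleV (x : V) (hxv : x ≠ v) :
    psiFun G v (toDoubleV G v x hxv) = PresentedGroup.of x := by
  by_cases h : G.Adj v x
  · rw [toDoubleV_pos G v x hxv h]; simp [psiFun]
  · rw [toDoubleV_neg G v x hxv h]; simp [psiFun]

lemma dswap_toDoubleV_of_adj (x : V) (hxv : x ≠ v) (h : G.Adj v x) :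
    dswap G v (toDoubleV G v x hxv) = toDoubleV G v x hxv := by
  rw [toDoubleV_pos G v x hxv h]
  rfl

open Classical in
/-- The map on generators for the map to the semidirect product. -/
noncomputable def thetaFun :
    V → (RACG (Double G v)) ⋊[phiAct G v] Multiplicative (ZMod 2) := fun x =>
  if hxv : x = v then SemidirectProduct.inr tGen
  else SemidirectProduct.inl (PresentedGroup.of (toDoubleV G v x hxv))

/-- The homomorphism from the RACG of `G` to the semidirect product. -/
noncomputable def thetaHom :
    RACG G →* (RACG (Double G v)) ⋊[phiAct G v] Multiplicative (ZMod 2) :=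
  racgLift (thetaFun G v)
    (by
      intro s
      by_cases hsv : s = v
      · simp only [thetaFun]
        rw [dif_pos hsv, ← map_mul, tGen_mul_tGen, map_one]
      · simp only [thetaFun]
        rw [dif_neg hsv, ← map_mul, racg_sq, map_one])
    (by
      intro s t hst
      by_cases hsv : s = v <;> by_cases htv : t = v
      · exact absurd hst (by rw [hsv, htv]; exact G.loopless.irrefl v)
      · have hvt : G.Adj v t := hsv ▸ hst
        simp only [thetaFun]
        rw [dif_pos hsv, dif_neg htv]
        refine comm_inr_inl _ _ ?_
        rw [phiAct_tGen, sigmaAut_of, dswap_toDoubleV_of_adj G v t htv hvt]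
      · have hvs : G.Adj v s := htv ▸ hst.symm
        simp only [thetaFun]
        rw [dif_pos htv, dif_neg hsv]
        refine (comm_inr_inl _ _ ?_).symm
        rw [phiAct_tGen, sigmaAut_of, dswap_toDoubleV_of_adj G v s hsv hvs]
      · simp only [thetaFun]
        rw [dif_neg hsv, dif_neg htv]
        exact (racg_comm (toDoubleV_adj G v hst hsv htv)).map SemidirectProduct.inl)

lemma thetaHom_of (s : V) : thetaHom G v (PresentedGroup.of s) = thetaFun G v s :=
  racgLift_of _ _ _ s

lemma thetaFun_v : thetaFun G v v = SemidirectProduct.inr tGen := by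
  simp [thetaFun]

lemma thetaFun_ne (x : V) (hxv : x ≠ v) :
    thetaFun G v x = SemidirectProduct.inl (PresentedGroup.of (toDoubleV G v x hxv)) := by
  simp only [thetaFun]
  rw [dif_neg hxv]

/-- The homomorphism from the semidirect product back to the RACG of `G`. -/
noncomputable def rhoHom :
    (RACG (Double G v)) ⋊[phiAct G v] Multiplicative (ZMod 2) →* RACG G :=
  SemidirectProduct.lift (psiHom G v) (powHomTwo (PresentedGroup.of v) (racg_sq v))
    (by
      intro g
      rcases c2_cases g with rfl | rfl
      · refine PresentedGroup.ext fun x => ?_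
        simp [map_one]
      · refine PresentedGroup.ext fun x => ?_
        simp only [MonoidHom.comp_apply, MulEquiv.coe_toMonoidHom, MulAut.conj_apply,
          phiAct_tGen, powHomTwo_ofAdd_one, sigmaAut_of, racg_inv, psiHom_of]
        rcases x with u | ⟨u, b⟩
        · simp only [dswap, Sum.map_inl, id_eq, psiFun, Sum.elim_inl]
          have c := (racg_comm (G := G) u.2).eq
          rw [c, mul_assoc, racg_sq, mul_one]
        · cases b
          · simp [dswap, psiFun]
          · simp only [dswap, Sum.map_inr, psiFun, Sum.elim_inr, Bool.not_true,
              Bool.false_eq_true, if_false, if_true]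
            exact (grp_sandwich _ _ (racg_sq v)).symm)

lemma rhoHom_inl (n : RACG (Double G v)) :
    rhoHom G v (SemidirectProduct.inl n) = psiHom G v n :=
  SemidirectProduct.lift_inl _ _ _ n

lemma rhoHom_inr (g : Multiplicative (ZMod 2)) :
    rhoHom G v (SemidirectProduct.inr g)
      = powHomTwo (PresentedGroup.of v) (racg_sq v) g :=
  SemidirectProduct.lift_inr _ _ _ g

lemma rho_theta (x : RACG G) : rhoHom G v (thetaHom G v x) = x := by
  have h : (rhoHom G v).comp (thetaHom G v) = MonoidHom.id _ := by
    refine PresentedGroup.ext fun s => ?_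
    simp only [MonoidHom.comp_apply, MonoidHom.id_apply, thetaHom_of]
    by_cases hsv : s = v
    · simp only [thetaFun]
      rw [dif_pos hsv, rhoHom_inr, powHomTwo_ofAdd_one, hsv]
    · simp only [thetaFun]
      rw [dif_neg hsv, rhoHom_inl, psiHom_of, psiFun_toDoubleV]
  exact DFunLike.congr_fun h x

lemma theta_rho (x : (RACG (Double G v)) ⋊[phiAct G v] Multiplicative (ZMod 2)) :
    thetaHom G v (rhoHom G v x) = x := by
  have h : (thetaHom G v).comp (rhoHom G v) = MonoidHom.id _ := by
    refine SemidirectProduct.hom_ext (PresentedGroup.ext fun d => ?_)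
      (MonoidHom.ext fun g => ?_)
    · simp only [MonoidHom.comp_apply, MonoidHom.id_apply]
      rw [rhoHom_inl, psiHom_of]
      rcases d with u | ⟨⟨u, hu1, hu2⟩, b⟩
      · obtain ⟨u, hu⟩ := u
        simp only [psiFun, Sum.elim_inl]
        rw [thetaHom_of]
        simp only [thetaFun]
        rw [dif_neg hu.ne']
        rw [toDoubleV_pos G v u hu.ne' hu]
      · cases b
        · simp only [psiFun, Sum.elim_inr, Bool.false_eq_true, if_false]
          rw [thetaHom_of]
          simp only [thetaFun]
          rw [dif_neg hu1]
          rw [toDoubleV_neg G v u hu1 hu2]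
        · simp only [psiFun, Sum.elim_inr, if_true]
          rw [map_mul, map_mul, thetaHom_of, thetaHom_of]
          rw [thetaFun_v, thetaFun_ne G v u hu1]
          rw [toDoubleV_neg G v u hu1 hu2]
          rw [inr_inl_inr tGen tGen_mul_tGen, phiAct_tGen]
          refine congrArg SemidirectProduct.inl ((sigmaAut_of G v _).trans ?_)
          rfl
    · simp only [MonoidHom.comp_apply, MonoidHom.id_apply]
      rw [rhoHom_inr]
      rcases c2_cases g with rfl | rfl
      · simp [map_one]
      · rw [powHomTwo_ofAdd_one, thetaHom_of, thetaFun_v]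
  exact DFunLike.congr_fun h x

/-- The RACG of `G` is isomorphic to the semidirect product of the RACG of the double
with `ZMod 2`. -/
noncomputable def eqvDouble :
    RACG G ≃* (RACG (Double G v)) ⋊[phiAct G v] Multiplicative (ZMod 2) :=
  { toFun := thetaHom G v
    invFun := rhoHom G v
    left_inv := rho_theta G v
    right_inv := theta_rho G v
    map_mul' := map_mul (thetaHom G v) }

end DoubleAux

/-- Doubling Lemma: for a finite simple graph `Γ` and a vertex `v`, the
right-angled Coxeter group of the double `D_vΓ` is isomorphic to an index-two subgroup of
the right-angled Coxeter group of `Γ`. -/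
theorem racg_double_is_index_two_subgroup {V : Type} [Finite V] (G : SimpleGraph V) (v : V) :
    ∃ H : Subgroup (RACG G), H.index = 2 ∧ Nonempty (RACG (Double G v) ≃* H) := by
  classical
  refine ⟨((SemidirectProduct.rightHom :
      (RACG (Double G v)) ⋊[phiAct G v] Multiplicative (ZMod 2) →* _).ker).map
      (eqvDouble G v).symm.toMonoidHom, ?_, ?_⟩
  · have hmap : ((SemidirectProduct.rightHom :
        (RACG (Double G v)) ⋊[phiAct G v] Multiplicative (ZMod 2) →* _).ker).map
        (eqvDouble G v).symm.toMonoidHom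
        = (SemidirectProduct.rightHom.comp (eqvDouble G v).toMonoidHom).ker := by
      rw [← MonoidHom.comap_ker, Subgroup.comap_equiv_eq_map_symm']
    rw [hmap, Subgroup.index_ker]
    have hsurj : Function.Surjective
        (SemidirectProduct.rightHom.comp (eqvDouble G v).toMonoidHom) :=
      SemidirectProduct.rightHom_surjective.comp (eqvDouble G v).surjective
    rw [MonoidHom.range_eq_top.2 hsurj, Subgroup.card_top]
    simp only [Nat.card_eq_fintype_card, Fintype.card_multiplicative, ZMod.card]
  · exact ⟨((MonoidHom.ofInjective SemidirectProduct.inl_injective).trans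
      (MulEquiv.subgroupCongr SemidirectProduct.range_inl_eq_ker_rightHom)).trans
      (MulEquiv.subgroupMap (eqvDouble G v).symm _)⟩
end

section
/- Let Γ be a finite simple graph and let Γ' be obtained from Γ by a sequence of n doubling moves. Then the right-angled Coxeter group W_{Γ'} is isomorphic to a subgroup of W_Γ of index 2^n; in particular W_{Γ'} is isomorphic to a finite-index subgroup of W_Γ. -/
open SimpleGraph

/-! ### Auxiliary development for the proof -/

namespace RACGDoubling

open PresentedGroup

section BasicRels

variable {V : Type} {G : SimpleGraph V}

/-- Squares of generators are trivial in a RACG. -/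
lemma racg_sq (s : V) : (of s : RACG G) * of s = 1 := by
  have hm : (FreeGroup.of s * FreeGroup.of s : FreeGroup V) ∈
      Subgroup.normalClosure (racgRels G) :=
    Subgroup.subset_normalClosure (Or.inl ⟨s, rfl⟩)
  have : (mk (racgRels G)) (FreeGroup.of s * FreeGroup.of s) = 1 :=
    (QuotientGroup.eq_one_iff _).2 hm
  rw [map_mul] at this
  exact this

lemma racg_inv_of (s : V) : (of s : RACG G)⁻¹ = of s :=
  inv_eq_of_mul_eq_one_right (racg_sq s)

/-- Adjacent generators commute in a RACG. -/
lemma racg_comm {s t : V} (h : G.Adj s t) :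
    (of s : RACG G) * of t = of t * of s := by
  have hm : ((FreeGroup.of s * FreeGroup.of t) * (FreeGroup.of t * FreeGroup.of s)⁻¹ :
      FreeGroup V) ∈ Subgroup.normalClosure (racgRels G) :=
    Subgroup.subset_normalClosure (Or.inr ⟨s, t, h, rfl⟩)
  have h1 : (mk (racgRels G)) ((FreeGroup.of s * FreeGroup.of t) *
      (FreeGroup.of t * FreeGroup.of s)⁻¹) = 1 :=
    (QuotientGroup.eq_one_iff _).2 hm
  rw [map_mul, map_inv, map_mul, map_mul] at h1
  exact mul_inv_eq_one.mp h1

end BasicRels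

section GroupLemmas

variable {Gp : Type*} [Group Gp]

lemma conj_sq {a b : Gp} (ha : a * a = 1) (hb : b * b = 1) :
    a * b * a * (a * b * a) = 1 := by
  have h1 : a * b * a * (a * b * a) = a * b * (a * a) * b * a := by group
  rw [h1, ha, mul_one]
  have h2 : a * b * b * a = a * (b * b) * a := by group
  rw [h2, hb, mul_one, ha]

lemma comm_conj {a b c : Gp} (hab : a * b = b * a) (hac : a * c = c * a) :
    a * (b * c * b) = b * c * b * a := by
  calc a * (b * c * b) = (a * b) * (c * b) := by group
    _ = (b * a) * (c * b) := by rw [hab]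
    _ = b * (a * c) * b := by group
    _ = b * (c * a) * b := by rw [hac]
    _ = b * c * (a * b) := by group
    _ = b * c * (b * a) := by rw [hab]
    _ = b * c * b * a := by group

lemma conj_comm_conj {a b c : Gp} (hb : b * b = 1) (hcd : a * c = c * a) :
    b * a * b * (b * c * b) = b * c * b * (b * a * b) := by
  have key : ∀ x y : Gp, b * x * b * (b * y * b) = b * (x * y) * b := by
    intro x y
    have h1 : b * x * b * (b * y * b) = b * x * (b * b) * y * b := by group
    rw [h1, hb, mul_one]
    group
  rw [key, key, hcd]

end GroupLemmas

section Swap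

variable {V : Type} (G : SimpleGraph V) (v : V)

/-- The involution of the vertices of the double exchanging the two copies. -/
def swapVert : DoubleVert G v → DoubleVert G v :=
  Sum.map id fun p => (p.1, !p.2)

lemma swapVert_swapVert (a : DoubleVert G v) : swapVert G v (swapVert G v a) = a := by
  rcases a with u | ⟨u, b⟩
  · rfl
  · simp [swapVert]
    rfl

lemma adj_swapVert {a b : DoubleVert G v} (h : (Double G v).Adj a b) :
    (Double G v).Adj (swapVert G v a) (swapVert G v b) := by
  obtain ⟨h1, h2⟩ : G.Adj a.toV b.toV ∧ (a.copy = none ∨ b.copy = none ∨ a.copy = b.copy) := h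
  show G.Adj (swapVert G v a).toV (swapVert G v b).toV ∧ _
  constructor
  · rcases a with u | ⟨u, c⟩ <;> rcases b with w | ⟨w, d⟩ <;>
      simpa [swapVert, DoubleVert.toV] using h1
  · rcases a with u | ⟨u, c⟩ <;> rcases b with w | ⟨w, d⟩ <;>
      simp_all [swapVert, DoubleVert.copy]

/-- The swap automorphism of the RACG of the double, as a homomorphism. -/
def sigma : RACG (Double G v) →* RACG (Double G v) :=
  toGroup (f := fun a => of (swapVert G v a)) (by
    rintro r (⟨s, rfl⟩ | ⟨s, t, hst, rfl⟩)
    · simp only [map_mul, FreeGroup.lift_apply_of]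
      exact racg_sq _
    · simp only [map_mul, map_inv, FreeGroup.lift_apply_of]
      exact mul_inv_eq_one.mpr (racg_comm (adj_swapVert G v hst)))

@[simp] lemma sigma_of (a : DoubleVert G v) :
    sigma G v (of a) = of (swapVert G v a) := toGroup.of _

lemma sigma_sigma (x : RACG (Double G v)) : sigma G v (sigma G v x) = x := by
  have : (sigma G v).comp (sigma G v) = MonoidHom.id _ := by
    ext a
    simp [swapVert_swapVert]
  exact DFunLike.congr_fun this x

end Swap

section Emb

variable {V : Type} (G : SimpleGraph V) (v : V)

/-- The images of the generators of the double in `W_Γ`. -/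
def embFun : DoubleVert G v → RACG G
  | Sum.inl u => of u.1
  | Sum.inr (u, false) => of u.1
  | Sum.inr (u, true) => of v * of u.1 * of v

lemma embFun_rels : ∀ r ∈ racgRels (Double G v),
    FreeGroup.lift (embFun G v) r = 1 := by
  rintro r (⟨s, rfl⟩ | ⟨s, t, hst, rfl⟩)
  · simp only [map_mul, FreeGroup.lift_apply_of]
    rcases s with u | ⟨u, (_ | _)⟩
    · exact racg_sq _
    · exact racg_sq _
    · exact conj_sq (racg_sq v) (racg_sq u.1)
  · simp only [map_mul, map_inv, FreeGroup.lift_apply_of]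
    refine mul_inv_eq_one.mpr ?_
    obtain ⟨h1, h2⟩ : G.Adj s.toV t.toV ∧ (s.copy = none ∨ t.copy = none ∨ s.copy = t.copy) := hst
    rcases s with u | ⟨u, (_ | _)⟩ <;> rcases t with w | ⟨w, (_ | _)⟩
    · exact racg_comm h1
    · exact racg_comm h1
    · exact comm_conj (racg_comm u.2.symm) (racg_comm h1)
    · exact racg_comm h1
    · exact racg_comm h1
    · simp [DoubleVert.copy] at h2
    · exact (comm_conj (racg_comm w.2.symm) (racg_comm h1.symm)).symm
    · simp [DoubleVert.copy] at h2
    · exact conj_comm_conj (racg_sq v) (racg_comm h1)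

/-- The homomorphism from the RACG of the double to `W_Γ`. -/
def emb : RACG (Double G v) →* RACG G :=
  toGroup (embFun_rels G v)

@[simp] lemma emb_of (a : DoubleVert G v) : emb G v (of a) = embFun G v a := toGroup.of _

end Emb

end RACGDoubling

namespace RACGDoubling

open PresentedGroup

section Action

variable {V : Type} (G : SimpleGraph V) (v : V)

/-- Left multiplication by an involution, as a permutation of `W_D × Bool`. -/
def pmul (x : RACG (Double G v)) (hx : x * x = 1) :
    Equiv.Perm (RACG (Double G v) × Bool) :=
  Function.Involutive.toPerm (fun p => (x * p.1, p.2)) (by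
    intro p
    simp only [← mul_assoc, hx, one_mul])

@[simp] lemma pmul_apply (x : RACG (Double G v)) (hx : x * x = 1)
    (p : RACG (Double G v) × Bool) : pmul G v x hx p = (x * p.1, p.2) := rfl

/-- The permutation corresponding to the deleted vertex `v`. -/
def pv : Equiv.Perm (RACG (Double G v) × Bool) :=
  Function.Involutive.toPerm (fun p => (sigma G v p.1, !p.2)) (by
    intro p
    simp [sigma_sigma])

@[simp] lemma pv_apply (p : RACG (Double G v) × Bool) :
    pv G v p = (sigma G v p.1, !p.2) := rfl

lemma involutive_mul_self {α : Type} {f : α → α} (hf : Function.Involutive f) :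
    hf.toPerm * hf.toPerm = 1 :=
  Equiv.ext fun x => hf x

lemma pmul_mul_pmul (x y : RACG (Double G v)) (hx : x * x = 1) (hy : y * y = 1)
    (hxy : x * y = y * x) :
    pmul G v x hx * pmul G v y hy = pmul G v y hy * pmul G v x hx := by
  ext p : 1
  simp only [Equiv.Perm.mul_apply, pmul_apply, ← mul_assoc, hxy]

open Classical in
/-- Images of the generators of `W_Γ` in the permutation group of `W_D × Bool`. -/
noncomputable def actFun (u : V) : Equiv.Perm (RACG (Double G v) × Bool) :=
  if h : u = v then pv G v
  else if h2 : G.Adj v u then pmul G v (of (Sum.inl ⟨u, h2⟩)) (racg_sq _)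
  else pmul G v (of (Sum.inr (⟨u, h, h2⟩, false))) (racg_sq _)

lemma actFun_sq (u : V) : actFun G v u * actFun G v u = 1 := by
  unfold actFun
  split
  · exact involutive_mul_self _
  · split
    · exact involutive_mul_self _
    · exact involutive_mul_self _

lemma pv_comm_pmul_link (u : {u : V // G.Adj v u}) :
    pv G v * pmul G v (of (Sum.inl u)) (racg_sq _) =
      pmul G v (of (Sum.inl u)) (racg_sq _) * pv G v := by
  ext p : 1
  simp only [Equiv.Perm.mul_apply, pmul_apply, pv_apply, map_mul, sigma_of]
  rfl

lemma actFun_comm {s t : V} (h : G.Adj s t) :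
    actFun G v s * actFun G v t = actFun G v t * actFun G v s := by
  unfold actFun
  rcases eq_or_ne s v with hs | hs
  · have h2 : G.Adj v t := by rwa [hs] at h
    rw [dif_pos hs, dif_neg h2.ne', dif_pos h2]
    exact pv_comm_pmul_link G v ⟨t, h2⟩
  · rcases eq_or_ne t v with ht | ht
    · have h2 : G.Adj v s := by rw [ht] at h; exact h.symm
      rw [dif_pos ht, dif_neg h2.ne', dif_pos h2]
      exact (pv_comm_pmul_link G v ⟨s, h2⟩).symm
    · rw [dif_neg hs, dif_neg ht]
      have key : ∀ (d e : DoubleVert G v), (Double G v).Adj d e →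
          pmul G v (of d) (racg_sq _) * pmul G v (of e) (racg_sq _) =
            pmul G v (of e) (racg_sq _) * pmul G v (of d) (racg_sq _) :=
        fun d e hde => pmul_mul_pmul G v _ _ _ _ (racg_comm hde)
      split <;> split
      · refine key _ _ (show _ ∧ _ from ⟨h, ?_⟩)
        simp [DoubleVert.copy]
      · refine key _ _ (show _ ∧ _ from ⟨h, ?_⟩)
        simp [DoubleVert.copy]
      · refine key _ _ (show _ ∧ _ from ⟨h, ?_⟩)
        simp [DoubleVert.copy]
      · refine key _ _ (show _ ∧ _ from ⟨h, ?_⟩)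
        simp [DoubleVert.copy]

/-- The action of `W_Γ` on `W_D × Bool`. -/
noncomputable def act : RACG G →* Equiv.Perm (RACG (Double G v) × Bool) :=
  toGroup (f := actFun G v) (by
    rintro r (⟨s, rfl⟩ | ⟨s, t, hst, rfl⟩)
    · simp only [map_mul, FreeGroup.lift_apply_of]
      exact actFun_sq G v s
    · simp only [map_mul, map_inv, FreeGroup.lift_apply_of]
      exact mul_inv_eq_one.mpr (actFun_comm G v hst))

@[simp] lemma act_of (u : V) : act G v (of u) = actFun G v u := toGroup.of _

/-- Left multiplication on the first factor, as a homomorphism to permutations. -/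
noncomputable def lmul : RACG (Double G v) →* Equiv.Perm (RACG (Double G v) × Bool) :=
  MonoidHom.mk' (fun x =>
    { toFun := fun p => (x * p.1, p.2)
      invFun := fun p => (x⁻¹ * p.1, p.2)
      left_inv := fun p => by simp
      right_inv := fun p => by simp })
    (fun a b => Equiv.ext fun p => by simp [mul_assoc])

@[simp] lemma lmul_apply (x : RACG (Double G v)) (p : RACG (Double G v) × Bool) :
    lmul G v x p = (x * p.1, p.2) := rfl

lemma act_comp_emb : (act G v).comp (emb G v) = lmul G v := by
  refine PresentedGroup.ext fun a => ?_
  rcases a with u | ⟨u, b⟩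
  · simp only [MonoidHom.comp_apply, emb_of]
    show act G v (of u.1) = _
    rw [act_of]
    unfold actFun
    rw [dif_neg u.2.ne', dif_pos u.2]
    ext p : 1
    simp
  · cases b
    · simp only [MonoidHom.comp_apply, emb_of]
      show act G v (of u.1) = _
      rw [act_of]
      unfold actFun
      rw [dif_neg u.2.1, dif_neg u.2.2]
      ext p : 1
      simp
    · simp only [MonoidHom.comp_apply, emb_of]
      show act G v (of v * of u.1 * of v) = _
      rw [map_mul, map_mul, act_of, act_of]
      unfold actFun
      rw [dif_pos rfl, dif_neg u.2.1, dif_neg u.2.2]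
      ext p : 1
      simp only [Equiv.Perm.mul_apply, pv_apply, pmul_apply, lmul_apply, map_mul, sigma_of,
        sigma_sigma, Bool.not_not]
      rfl

lemma emb_injective : Function.Injective (emb G v) := by
  intro x y hxy
  have h1 : lmul G v x = lmul G v y := by
    rw [← act_comp_emb]
    simp only [MonoidHom.comp_apply, hxy]
  have h2 := congrArg (fun e : Equiv.Perm (RACG (Double G v) × Bool) => (e (1, false)).1) h1
  simpa using h2

end Action

end RACGDoubling

namespace RACGDoubling

open PresentedGroup

section Parity

variable {V : Type} (G : SimpleGraph V) (v : V)

/-- The nontrivial permutation of `Bool`. -/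
def notPerm : Equiv.Perm Bool :=
  Function.Involutive.toPerm not (fun b => Bool.not_not b)

@[simp] lemma notPerm_apply (b : Bool) : notPerm b = !b := rfl

open Classical in
/-- The parity homomorphism `W_Γ → Perm Bool`, counting occurrences of `v`. -/
noncomputable def par : RACG G →* Equiv.Perm Bool :=
  toGroup (f := fun u => if u = v then notPerm else 1) (by
    rintro r (⟨s, rfl⟩ | ⟨s, t, hst, rfl⟩)
    · simp only [map_mul, FreeGroup.lift_apply_of]
      split
      · exact involutive_mul_self _
      · exact one_mul 1
    · simp only [map_mul, map_inv, FreeGroup.lift_apply_of]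
      refine mul_inv_eq_one.mpr ?_
      rcases eq_or_ne s v with hs | hs
      · rw [if_pos hs, if_neg (fun h' => hst.ne (hs.trans h'.symm)), one_mul, mul_one]
      · rw [if_neg hs, one_mul, mul_one])

open Classical in
lemma par_of (u : V) : par G v (of u) = if u = v then notPerm else 1 := by
  classical
  exact toGroup.of _

lemma par_of_self : par G v (of v) = notPerm := by
  rw [par_of, if_pos rfl]

lemma par_of_ne {u : V} (hu : u ≠ v) : par G v (of u) = 1 := by
  rw [par_of, if_neg hu]

lemma notPerm_ne_one : notPerm ≠ 1 := by
  intro h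
  have := congrArg (fun e : Equiv.Perm Bool => e false) h
  simp at this

lemma par_surjective : Function.Surjective (par G v) := by
  intro π
  rcases hb : π false with _ | _
  · refine ⟨1, ?_⟩
    rw [map_one]
    ext b
    cases b
    · simp [hb]
    · rcases hb' : π true with _ | _
      · exact absurd (π.injective (hb.trans hb'.symm)) (by simp)
      · simp [hb']
  · refine ⟨of v, ?_⟩
    rw [par_of_self]
    ext b
    cases b
    · simp [hb]
    · rcases hb' : π true with _ | _
      · simp [hb']
      · exact absurd (π.injective (hb.trans hb'.symm)) (by simp)

lemma index_ker_par : (par G v).ker.index = 2 := by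
  rw [Subgroup.index_ker, (par G v).range_eq_top_of_surjective (par_surjective G v)]
  rw [Nat.card_congr Subgroup.topEquiv.toEquiv, Nat.card_eq_fintype_card]
  simp [Fintype.card_perm]

end Parity

section RangeKer

variable {V : Type} (G : SimpleGraph V) (v : V)

lemma par_comp_emb : (par G v).comp (emb G v) = 1 := by
  refine PresentedGroup.ext fun a => ?_
  rcases a with u | ⟨u, b⟩
  · simp only [MonoidHom.comp_apply, emb_of, MonoidHom.one_apply]
    show par G v (of u.1) = 1
    exact par_of_ne G v u.2.ne'
  · cases b
    · simp only [MonoidHom.comp_apply, emb_of, MonoidHom.one_apply]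
      show par G v (of u.1) = 1
      exact par_of_ne G v u.2.1
    · simp only [MonoidHom.comp_apply, emb_of, MonoidHom.one_apply]
      show par G v (of v * of u.1 * of v) = 1
      rw [map_mul, map_mul, par_of_self, par_of_ne G v u.2.1, mul_one]
      exact involutive_mul_self _

lemma range_emb_le_ker : (emb G v).range ≤ (par G v).ker := by
  rintro x ⟨y, rfl⟩
  have := DFunLike.congr_fun (par_comp_emb G v) y
  simpa [MonoidHom.mem_ker] using this

/-- Conjugation by `of v` preserves the range of `emb`. -/
lemma conj_emb (x : RACG (Double G v)) :
    of v * emb G v x * of v = emb G v (sigma G v x) := by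
  have key : ((MulAut.conj (of v : RACG G)).toMonoidHom.comp (emb G v)) =
      (emb G v).comp (sigma G v) := by
    refine PresentedGroup.ext fun a => ?_
    rcases a with u | ⟨u, b⟩
    · simp only [MonoidHom.comp_apply, emb_of, sigma_of, MulEquiv.coe_toMonoidHom,
        MulAut.conj_apply, racg_inv_of]
      show of v * of u.1 * of v = embFun G v (swapVert G v (Sum.inl u))
      have : embFun G v (swapVert G v (Sum.inl u)) = of u.1 := rfl
      rw [this, racg_comm u.2, mul_assoc, racg_sq, mul_one]
    · cases b
      · simp only [MonoidHom.comp_apply, emb_of, sigma_of, MulEquiv.coe_toMonoidHom,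
          MulAut.conj_apply, racg_inv_of]
        rfl
      · simp only [MonoidHom.comp_apply, emb_of, sigma_of, MulEquiv.coe_toMonoidHom,
          MulAut.conj_apply, racg_inv_of]
        show of v * (of v * of u.1 * of v) * of v = embFun G v (swapVert G v (Sum.inr (u, true)))
        have h1 : embFun G v (swapVert G v (Sum.inr (u, true))) = of u.1 := rfl
        have h2 : (of v : RACG G) * (of v * of u.1 * of v) * of v =
            (of v * of v) * of u.1 * (of v * of v) := by group
        rw [h1, h2, racg_sq, one_mul, mul_one]
  have := DFunLike.congr_fun key x
  simpa [racg_inv_of] using this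

lemma conj_mem_range {x : RACG G} (hx : x ∈ (emb G v).range) :
    of v * x * of v ∈ (emb G v).range := by
  obtain ⟨y, rfl⟩ := hx
  rw [conj_emb]
  exact ⟨sigma G v y, rfl⟩

lemma hv_sq : (of v : RACG G) * of v = 1 := racg_sq v

/-- The identity `(v x v)(v y) = v (x y)`. -/
lemma vxv_vy (x y : RACG G) :
    (of v * x * of v) * (of v * y) = of v * (x * y) := by
  have h : (of v * x * of v) * (of v * y) = of v * x * ((of v * of v) * y) := by group
  rw [h, hv_sq, one_mul, mul_assoc]

/-- The subgroup of elements `w` with `w ∈ range emb` or `v·w ∈ range emb`. -/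
noncomputable def evenSubgroup : Subgroup (RACG G) where
  carrier := {w | w ∈ (emb G v).range ∨ (of v) * w ∈ (emb G v).range}
  one_mem' := Or.inl (one_mem _)
  mul_mem' := by
    rintro a b (ha | ha) (hb | hb)
    · exact Or.inl (mul_mem ha hb)
    · refine Or.inr ?_
      have h := vxv_vy G v a b
      rw [← h]
      exact mul_mem (conj_mem_range G v ha) hb
    · refine Or.inr ?_
      rw [← mul_assoc]
      exact mul_mem ha hb
    · refine Or.inl ?_
      have key : (of v * (of v * a) * of v) * (of v * b) = a * b := by
        rw [vxv_vy G v]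
        calc of v * (of v * a * b) = (of v * of v) * (a * b) := by group
          _ = a * b := by rw [hv_sq G v, one_mul]
      rw [← key]
      exact mul_mem (conj_mem_range G v ha) hb
  inv_mem' := by
    rintro a (ha | ha)
    · exact Or.inl (inv_mem ha)
    · refine Or.inr ?_
      have h1 : a⁻¹ * of v ∈ (emb G v).range := by
        have : a⁻¹ * of v = (of v * a)⁻¹ := by rw [mul_inv_rev, racg_inv_of]
        rw [this]
        exact inv_mem ha
      have h2 : of v * (a⁻¹ * of v) * of v = of v * a⁻¹ := by
        calc of v * (a⁻¹ * of v) * of v = of v * a⁻¹ * (of v * of v) := by group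
          _ = of v * a⁻¹ := by rw [hv_sq G v, mul_one]
      rw [← h2]
      exact conj_mem_range G v h1

lemma ker_le_range_emb : (par G v).ker ≤ (emb G v).range := by
  intro w hw
  have hS : w ∈ evenSubgroup G v := by
    refine generated_by _ _ (fun u => ?_) w
    by_cases hu : u = v
    · refine Or.inr ?_
      rw [hu]
      exact ⟨1, by rw [map_one]; exact (hv_sq G v).symm⟩
    · by_cases h2 : G.Adj v u
      · exact Or.inl ⟨of (Sum.inl ⟨u, h2⟩), rfl⟩
      · exact Or.inl ⟨of (Sum.inr (⟨u, hu, h2⟩, false)), rfl⟩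
  rcases hS with h | h
  · exact h
  · exfalso
    have h1 : par G v (of v * w) = 1 := range_emb_le_ker G v h
    rw [map_mul, par_of_self, MonoidHom.mem_ker.mp hw, mul_one] at h1
    exact notPerm_ne_one h1

lemma range_emb_eq_ker : (emb G v).range = (par G v).ker :=
  le_antisymm (range_emb_le_ker G v) (ker_le_range_emb G v)

/-- **Single doubling step**: `W_{D_v G}` is an index-2 subgroup of `W_G`. -/
theorem double_step : ∃ H : Subgroup (RACG G), H.index = 2 ∧
    Nonempty (RACG (Double G v) ≃* H) := by
  refine ⟨(emb G v).range, ?_, ⟨MonoidHom.ofInjective (emb_injective G v)⟩⟩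
  rw [range_emb_eq_ker]
  exact index_ker_par G v

end RangeKer

end RACGDoubling

namespace RACGDoubling

open PresentedGroup

section Congr

variable {V W : Type} {G : SimpleGraph V} {G' : SimpleGraph W}

/-- The homomorphism of RACGs induced by a graph isomorphism. -/
def congrHom (e : G ≃g G') : RACG G →* RACG G' :=
  toGroup (f := fun a => of (e a)) (by
    rintro r (⟨s, rfl⟩ | ⟨s, t, hst, rfl⟩)
    · simp only [map_mul, FreeGroup.lift_apply_of]
      exact racg_sq _
    · simp only [map_mul, map_inv, FreeGroup.lift_apply_of]
      exact mul_inv_eq_one.mpr (racg_comm (e.map_adj_iff.mpr hst)))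

@[simp] lemma congrHom_of (e : G ≃g G') (a : V) :
    congrHom e (of a) = of (e a) := toGroup.of _

/-- The isomorphism of RACGs induced by a graph isomorphism. -/
def racgCongr (e : G ≃g G') : RACG G ≃* RACG G' where
  toFun := congrHom e
  invFun := congrHom e.symm
  left_inv := by
    have : (congrHom e.symm).comp (congrHom e) = MonoidHom.id _ := by
      refine PresentedGroup.ext fun a => ?_
      simp
    intro x
    exact DFunLike.congr_fun this x
  right_inv := by
    have : (congrHom e).comp (congrHom e.symm) = MonoidHom.id _ := by
      refine PresentedGroup.ext fun a => ?_
      simp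
    intro x
    exact DFunLike.congr_fun this x
  map_mul' := map_mul _

end Congr

end RACGDoubling

open RACGDoubling

/-- if `Γ'` is obtained from `Γ` by a sequence of `n` doubling moves, then
`W_{Γ'}` is isomorphic to a subgroup of `W_Γ` of index `2^n`; in particular to a finite-index
subgroup. -/
theorem racg_doubling_seq_index {n : ℕ} {Γ Γ' : FinGraph} (h : DoublingSeq n Γ Γ') :
    ∃ H : Subgroup (RACG Γ.graph), H.index = 2 ^ n ∧ H.FiniteIndex ∧
      Nonempty (RACG Γ'.graph ≃* H) := by
  induction h with
  | refl G =>
    exact ⟨⊤, by simp [Subgroup.index_top], inferInstance, ⟨Subgroup.topEquiv.symm⟩⟩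
  | step hseq hmove ih =>
    obtain ⟨H, hHidx, _, ⟨eH⟩⟩ := ih
    obtain ⟨v, ⟨giso⟩⟩ := hmove
    obtain ⟨H₂, h2idx, ⟨e2⟩⟩ := double_step _ v
    -- H₂ is a subgroup of the RACG of the middle graph; move it into `H` and then into `RACG Γ`.
    set L : Subgroup H := H₂.map eH.toMonoidHom with hL
    set K := L.map H.subtype with hK
    have hLidx : L.index = H₂.index := by
      have hker : eH.toMonoidHom.ker = ⊥ := (MonoidHom.ker_eq_bot_iff _).mpr eH.injective
      have hrange : eH.toMonoidHom.range = ⊤ := MonoidHom.range_eq_top.mpr eH.surjective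
      rw [hL, Subgroup.index_map, hker, hrange, Subgroup.index_top, mul_one, sup_bot_eq]
    have hKidx : K.index = L.index * H.index := by
      rw [hK, Subgroup.index_map, Subgroup.ker_subtype, Subgroup.range_subtype, sup_bot_eq]
    refine ⟨K, ?_, ?_, ?_⟩
    · rw [hKidx, hLidx, h2idx, hHidx, pow_succ, mul_comm]
    · constructor
      rw [hKidx, hLidx, h2idx, hHidx]
      positivity
    have equiv1 : RACG _ ≃* H₂ := (racgCongr giso).trans e2
    have equiv2 : H₂ ≃* L := eH.subgroupMap H₂
    have equiv3 : L ≃* K := Subgroup.equivMapOfInjective L H.subtype H.subtype_injective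
    exact ⟨(equiv1.trans equiv2).trans equiv3⟩
end

section
/- Let Γ be a triangle-free finite simple graph and let Λ ⊆ Γ be a K_5 subdivision. Then there exist Λ-essential vertices a, b, c such that the branches [a,b] and [a,c] of Λ both have length at least 2 (i.e., are subdivided). -/
open SimpleGraph

/-! ### Auxiliary machinery for Statement 5 -/

namespace K5Aux

open SimpleGraph Walk

variable {V : Type}

lemma subdivideEdge_adj_some_none {G : SimpleGraph V} {u w x : V} :
    (subdivideEdge G u w).Adj (some x) none ↔ x = u ∨ x = w := Iff.rfl

lemma subdivideEdge_adj_none_some {G : SimpleGraph V} {u w x : V} :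
    (subdivideEdge G u w).Adj none (some x) ↔ x = u ∨ x = w := Iff.rfl

lemma subdivideEdge_adj_some_some {G : SimpleGraph V} {u w a c : V} :
    (subdivideEdge G u w).Adj (some a) (some c) ↔
      G.Adj a c ∧ ¬(a = u ∧ c = w) ∧ ¬(a = w ∧ c = u) := Iff.rfl

/-- Transfer a walk through an edge subdivision, replacing each traversal of the
subdivided edge by the length-two detour through the new vertex. -/
def subdivWalk [DecidableEq V] {G : SimpleGraph V} (u w : V) :
    ∀ {a b : V}, G.Walk a b → (subdivideEdge G u w).Walk (some a) (some b)
  | _, _, .nil => .nil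
  | a, b, .cons (v := c) h q =>
    if hx : s(a, c) = s(u, w) then
      Walk.cons (v := (none : Option V))
        (subdivideEdge_adj_some_none.mpr (by
          rcases Sym2.eq_iff.mp hx with ⟨h1, _⟩ | ⟨h1, _⟩
          · exact Or.inl h1
          · exact Or.inr h1))
        (Walk.cons
          (subdivideEdge_adj_none_some.mpr (by
            rcases Sym2.eq_iff.mp hx with ⟨_, h2⟩ | ⟨_, h2⟩
            · exact Or.inr h2
            · exact Or.inl h2))
          (subdivWalk u w q))
    else
      Walk.cons
        (subdivideEdge_adj_some_some.mpr
          ⟨h, fun hc => hx (by rw [hc.1, hc.2]),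
            fun hc => hx (by rw [hc.1, hc.2]; exact Sym2.eq_swap)⟩)
        (subdivWalk u w q)

lemma support_subdivWalk_some [DecidableEq V] {G : SimpleGraph V} {u w : V} {a b : V} (p : G.Walk a b) (x : V)
    (hx : some x ∈ (subdivWalk u w p).support) : x ∈ p.support := by
  induction p with
  | nil =>
    simp only [subdivWalk, Walk.support_nil, List.mem_singleton] at hx
    simp [Option.some_injective _ hx]
  | cons h q ih =>
    rw [subdivWalk] at hx
    split_ifs at hx with he
    · simp only [Walk.support_cons, List.mem_cons] at hx ⊢
      rcases hx with h1 | h1 | h1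
      · exact Or.inl (Option.some_injective _ h1)
      · exact absurd h1 (by simp)
      · exact Or.inr (ih h1)
    · simp only [Walk.support_cons, List.mem_cons] at hx ⊢
      rcases hx with h1 | h1
      · exact Or.inl (Option.some_injective _ h1)
      · exact Or.inr (ih h1)

lemma none_mem_support_subdivWalk [DecidableEq V] {G : SimpleGraph V} {u w : V} {a b : V} (p : G.Walk a b)
    (hx : (none : Option V) ∈ (subdivWalk u w p).support) : s(u, w) ∈ p.edges := by
  induction p with
  | nil => simp [subdivWalk] at hx
  | cons h q ih =>
    rw [subdivWalk] at hx
    split_ifs at hx with he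
    · simp only [Walk.edges_cons, List.mem_cons]
      exact Or.inl he.symm
    · simp only [Walk.support_cons, List.mem_cons] at hx
      rcases hx with h1 | h1
      · exact absurd h1 (by simp)
      · simp only [Walk.edges_cons, List.mem_cons]
        exact Or.inr (ih h1)

lemma length_le_subdivWalk [DecidableEq V] {G : SimpleGraph V} {u w : V} {a b : V} (p : G.Walk a b) :
    p.length ≤ (subdivWalk u w p).length := by
  induction p with
  | nil => simp [subdivWalk]
  | cons h q ih =>
    rw [subdivWalk]
    split_ifs
    · simp only [Walk.length_cons]; omega
    · simp only [Walk.length_cons]; omega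

lemma isPath_subdivWalk [DecidableEq V] {G : SimpleGraph V} {u w : V} {a b : V} {p : G.Walk a b}
    (hp : p.IsPath) : (subdivWalk u w p).IsPath := by
  induction p with
  | nil => simp [subdivWalk]
  | cons h q ih =>
    rw [Walk.cons_isPath_iff] at hp
    rw [subdivWalk]
    split_ifs with he
    · rw [Walk.cons_isPath_iff, Walk.cons_isPath_iff]
      refine ⟨⟨ih hp.1, ?_⟩, ?_⟩
      · intro hn
        have hedge := none_mem_support_subdivWalk q hn
        have hu : u ∈ q.support := q.fst_mem_support_of_mem_edges hedge
        have hw : w ∈ q.support := q.snd_mem_support_of_mem_edges hedge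
        rcases Sym2.eq_iff.mp he with ⟨h1, _⟩ | ⟨h1, _⟩
        · exact hp.2 (h1 ▸ hu)
        · exact hp.2 (h1 ▸ hw)
      · simp only [Walk.support_cons, List.mem_cons]
        rintro (h1 | h1)
        · exact absurd h1 (by simp)
        · exact hp.2 (support_subdivWalk_some q _ h1)
    · rw [Walk.cons_isPath_iff]
      exact ⟨ih hp.1, fun h1 => hp.2 (support_subdivWalk_some q _ h1)⟩

lemma ncard_neighborSet_none [Finite V] {G : SimpleGraph V} {u w : V} (huw : G.Adj u w) :
    ((subdivideEdge G u w).neighborSet none).ncard = 2 := by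
  have hset : (subdivideEdge G u w).neighborSet none = {some u, some w} := by
    ext b
    cases b with
    | none =>
      simp only [SimpleGraph.mem_neighborSet, Set.mem_insert_iff, Set.mem_singleton_iff]
      constructor
      · intro hadj; exact absurd hadj (fun h => h)
      · rintro (h | h) <;> exact absurd h (by simp)
    | some x =>
      simp only [SimpleGraph.mem_neighborSet, subdivideEdge_adj_none_some,
        Set.mem_insert_iff, Set.mem_singleton_iff, Option.some_inj]
  rw [hset]
  exact Set.ncard_pair (by simpa using huw.ne)

lemma ncard_neighborSet_some [Finite V] {G : SimpleGraph V} {u w : V} (huw : G.Adj u w)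
    (v : V) :
    ((subdivideEdge G u w).neighborSet (some v)).ncard = (G.neighborSet v).ncard := by
  classical
  have hne : u ≠ w := huw.ne
  rw [← Nat.card_coe_set_eq, ← Nat.card_coe_set_eq]
  symm
  apply Nat.card_congr
  have mem1 : ∀ x : V, G.Adj v x → s(v, x) = s(u, w) →
      (none : Option V) ∈ (subdivideEdge G u w).neighborSet (some v) := by
    intro x hadj h
    rw [SimpleGraph.mem_neighborSet, subdivideEdge_adj_some_none]
    rcases Sym2.eq_iff.mp h with ⟨h1, _⟩ | ⟨h1, _⟩
    · exact Or.inl h1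
    · exact Or.inr h1
  have mem2 : ∀ x : V, G.Adj v x → s(v, x) ≠ s(u, w) →
      (some x) ∈ (subdivideEdge G u w).neighborSet (some v) := by
    intro x hadj h
    rw [SimpleGraph.mem_neighborSet, subdivideEdge_adj_some_some]
    exact ⟨hadj, fun hc => h (by rw [hc.1, hc.2]),
      fun hc => h (by rw [hc.1, hc.2]; exact Sym2.eq_swap)⟩
  refine Equiv.ofBijective (fun x => if h : s(v, (x : V)) = s(u, w)
      then ⟨none, mem1 x x.2 h⟩ else ⟨some (x : V), mem2 x x.2 h⟩) ⟨?_, ?_⟩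
  · intro x y hxy
    rw [Subtype.ext_iff] at hxy
    dsimp only at hxy
    by_cases hx : s(v, (x : V)) = s(u, w) <;> by_cases hy : s(v, (y : V)) = s(u, w)
    · apply Subtype.ext
      rcases Sym2.eq_iff.mp hx with ⟨hv1, hx1⟩ | ⟨hv1, hx1⟩ <;>
        rcases Sym2.eq_iff.mp hy with ⟨hv2, hy1⟩ | ⟨hv2, hy1⟩
      · rw [hx1, hy1]
      · exact absurd (hv1.symm.trans hv2) hne
      · exact absurd (hv2.symm.trans hv1) hne
      · rw [hx1, hy1]
    · rw [dif_pos hx, dif_neg hy] at hxy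
      exact absurd hxy (by simp)
    · rw [dif_neg hx, dif_pos hy] at hxy
      exact absurd hxy (by simp)
    · rw [dif_neg hx, dif_neg hy] at hxy
      exact Subtype.ext (Option.some_injective _ hxy)
  · rintro ⟨b, hb⟩
    cases b with
    | none =>
      have hb2 : (subdivideEdge G u w).Adj (some v) none := hb
      have hb' : v = u ∨ v = w := subdivideEdge_adj_some_none.mp hb2
      rcases hb' with h1 | h1
      · have hw' : w ∈ G.neighborSet v := by rw [SimpleGraph.mem_neighborSet, h1]; exact huw
        refine ⟨⟨w, hw'⟩, ?_⟩
        apply Subtype.ext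
        dsimp only
        rw [dif_pos (show s(v, w) = s(u, w) by rw [h1])]
      · have hu' : u ∈ G.neighborSet v := by
          rw [SimpleGraph.mem_neighborSet, h1]; exact huw.symm
        refine ⟨⟨u, hu'⟩, ?_⟩
        apply Subtype.ext
        dsimp only
        rw [dif_pos (show s(v, u) = s(u, w) by rw [h1]; exact Sym2.eq_swap)]
    | some x =>
      have hb2 : (subdivideEdge G u w).Adj (some v) (some x) := hb
      obtain ⟨hadj, h2, h3⟩ := subdivideEdge_adj_some_some.mp hb2
      refine ⟨⟨x, hadj⟩, ?_⟩
      have hcond : ¬ s(v, x) = s(u, w) := by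
        intro hcon
        rcases Sym2.eq_iff.mp hcon with ⟨hv1, hx1⟩ | ⟨hv1, hx1⟩
        · exact h2 ⟨hv1, hx1⟩
        · exact h3 ⟨hv1, hx1⟩
      apply Subtype.ext
      dsimp only
      rw [dif_neg hcond]

/-- The combinatorial pattern of a `K_5` subdivision: five distinguished vertices of
valence at least 3, joined pairwise by paths whose interior vertices have valence
at most 2. -/
structure K5Pattern {W : Type} (H : SimpleGraph W) (β : Fin 5 → W) : Prop where
  inj : Function.Injective β
  deg : ∀ i, 3 ≤ (H.neighborSet (β i)).ncard
  branch : ∀ i j : Fin 5, i ≠ j → ∃ p : H.Walk (β i) (β j), p.IsPath ∧ 0 < p.length ∧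
    ∀ v ∈ p.support, v ≠ β i → v ≠ β j → (H.neighborSet v).ncard ≤ 2

lemma K5Pattern.map {W W' : Type} {H : SimpleGraph W} {H' : SimpleGraph W'} (f : H ≃g H')
    {β : Fin 5 → W} (hp : K5Pattern H β) : K5Pattern H' (fun i => f (β i)) where
  inj := f.toEquiv.injective.comp hp.inj
  deg i := by
    rw [← Nat.card_coe_set_eq, ← Nat.card_congr (f.mapNeighborSet (β i)),
      Nat.card_coe_set_eq]
    exact hp.deg i
  branch i j hij := by
    obtain ⟨p, hpath, hpos, hint⟩ := hp.branch i j hij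
    refine ⟨p.map f.toHom, Walk.map_isPath_of_injective f.toEquiv.injective hpath, ?_, ?_⟩
    · rwa [Walk.length_map]
    · intro v hv hvi hvj
      rw [Walk.support_map, List.mem_map] at hv
      obtain ⟨x, hx, rfl⟩ := hv
      have h2 := hint x hx (fun h => hvi (by rw [h]; rfl)) (fun h => hvj (by rw [h]; rfl))
      show (H'.neighborSet (f x)).ncard ≤ 2
      rw [← Nat.card_coe_set_eq, ← Nat.card_congr (f.mapNeighborSet x),
        Nat.card_coe_set_eq]
      exact h2

lemma K5Pattern.subdivide [Finite V] {G : SimpleGraph V} {u w : V} (huw : G.Adj u w)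
    {β : Fin 5 → V} (hp : K5Pattern G β) :
    K5Pattern (subdivideEdge G u w) (fun i => some (β i)) := by
  classical
  refine ⟨fun i j h => hp.inj (Option.some_injective _ h),
    fun i => by rw [ncard_neighborSet_some huw]; exact hp.deg i, ?_⟩
  intro i j hij
  obtain ⟨p, hpath, hpos, hint⟩ := hp.branch i j hij
  refine ⟨subdivWalk u w p, isPath_subdivWalk hpath,
    lt_of_lt_of_le hpos (length_le_subdivWalk p), ?_⟩
  intro v hv hvi hvj
  cases v with
  | none => exact (ncard_neighborSet_none huw).le
  | some x =>
    rw [ncard_neighborSet_some huw]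
    exact hint x (support_subdivWalk_some p x hv)
      (fun h => hvi (by rw [h])) (fun h => hvj (by rw [h]))

lemma exists_pattern_of_isSubdivisionOf {H : FinGraph} (h : IsSubdivisionOf K5Graph H) :
    ∃ β : Fin 5 → H.V, K5Pattern H.graph β := by
  induction h with
  | refl =>
    refine ⟨id, Function.injective_id, ?_, ?_⟩
    · intro i
      show 3 ≤ ((completeGraph (Fin 5)).neighborSet (id i)).ncard
      have hset : (completeGraph (Fin 5)).neighborSet (id i) = {i}ᶜ := by
        ext j
        simp [SimpleGraph.neighborSet, completeGraph, ne_comm]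
      rw [hset]
      have h1 : ({i} : Set (Fin 5)).ncard + ({i}ᶜ : Set (Fin 5)).ncard = Nat.card (Fin 5) :=
        Set.ncard_add_ncard_compl _
      simp only [Set.ncard_singleton, Nat.card_eq_fintype_card, Fintype.card_fin] at h1
      omega
    · intro i j hij
      refine ⟨Walk.cons (by simpa [K5Graph] using hij) Walk.nil, ?_, by exact Nat.succ_pos 0, ?_⟩
      · exact Walk.IsPath.cons Walk.IsPath.nil (fun h => hij (List.mem_singleton.mp h))
      · intro v hv hvi hvj
        have hv : v = i ∨ v = j ∨ v ∈ ([] : List (Fin 5)) :=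
          (List.mem_cons.mp hv).imp_right List.mem_cons.mp
        rcases hv with h1 | h1 | h1
        · exact absurd h1 hvi
        · exact absurd h1 hvj
        · exact absurd h1 List.not_mem_nil
  | tail hsub hstep ih =>
    obtain ⟨β, hβ⟩ := ih
    obtain ⟨u, w, hadj, ⟨e⟩⟩ := hstep
    exact ⟨_, (hβ.subdivide hadj).map e.symm⟩

lemma core_aux {m : Fin 5 → Fin 5 → Prop}
    (htri : ∀ i j k : Fin 5, i ≠ j → i ≠ k → j ≠ k → m i j ∨ m i k ∨ m j k)
    (hno : ∀ x y z : Fin 5, x ≠ y → x ≠ z → y ≠ z → m x y → ¬ m x z)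
    {a b c d e : Fin 5}
    (hab : a ≠ b) (hac : a ≠ c) (hae : a ≠ e)
    (hbc : b ≠ c) (hbd : b ≠ d) (hbe : b ≠ e)
    (hcd : c ≠ d) (hce : c ≠ e) (hde : d ≠ e) (had : a ≠ d)
    (hm : m a b) : False := by
  have hac' : ¬ m a c := hno a b c hab hac hbc hm
  have had' : ¬ m a d := hno a b d hab had hbd hm
  have hae' : ¬ m a e := hno a b e hab hae hbe hm
  have hcd' : m c d := by
    rcases htri a c d hac had hcd with h | h | h
    · exact absurd h hac'
    · exact absurd h had'
    · exact h
  have hce' : ¬ m c e := hno c d e hcd hce hde hcd'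
  rcases htri a c e hac hae hce with h | h | h
  · exact hac' h
  · exact hae' h
  · exact hce' h

lemma core {m : Fin 5 → Fin 5 → Prop}
    (htri : ∀ i j k : Fin 5, i ≠ j → i ≠ k → j ≠ k → m i j ∨ m i k ∨ m j k) :
    ∃ a b c : Fin 5, a ≠ b ∧ a ≠ c ∧ b ≠ c ∧ m a b ∧ m a c := by
  by_contra hcon
  push_neg at hcon
  have hno : ∀ x y z : Fin 5, x ≠ y → x ≠ z → y ≠ z → m x y → ¬ m x z :=
    fun x y z h1 h2 h3 h4 h5 => (hcon x y z h1 h2 h3 h4) h5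
  rcases htri 0 1 2 (by decide) (by decide) (by decide) with h | h | h
  · exact core_aux htri hno (a := 0) (b := 1) (c := 2) (d := 3) (e := 4)
      (by decide) (by decide) (by decide) (by decide) (by decide) (by decide)
      (by decide) (by decide) (by decide) (by decide) h
  · exact core_aux htri hno (a := 0) (b := 2) (c := 1) (d := 3) (e := 4)
      (by decide) (by decide) (by decide) (by decide) (by decide) (by decide)
      (by decide) (by decide) (by decide) (by decide) h
  · exact core_aux htri hno (a := 1) (b := 2) (c := 0) (d := 3) (e := 4)
      (by decide) (by decide) (by decide) (by decide) (by decide) (by decide)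
      (by decide) (by decide) (by decide) (by decide) h

end K5Aux

/-- in a triangle-free finite simple graph, any `K_5` subdivision `Λ` has
essential vertices `a, b, c` such that the branches `[a,b]` and `[a,c]` are both subdivided
(have length at least 2). -/
theorem k5_has_two_subdivided_branches {V : Type} [Finite V] (G : SimpleGraph V)
    (htf : G.CliqueFree 3) (Λ : G.Subgraph) (hΛ : IsK5Sub G Λ) :
    ∃ a b c : V, a ≠ b ∧ a ≠ c ∧ b ≠ c ∧
      Essential Λ a ∧ Essential Λ b ∧ Essential Λ c ∧
      (∃ p : G.Walk a b, IsBranch Λ p ∧ 2 ≤ p.length) ∧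
      (∃ q : G.Walk a c, IsBranch Λ q ∧ 2 ≤ q.length) := by
  classical
  obtain ⟨H', hsub, ⟨e⟩⟩ := hΛ
  obtain ⟨β, hβ⟩ := K5Aux.exists_pattern_of_isSubdivisionOf hsub
  have hβ' : K5Aux.K5Pattern Λ.coe (fun i => e (β i)) := hβ.map e
  set γ : Fin 5 → V := fun i => ((e (β i) : Λ.verts) : V) with hγ
  have hginj : Function.Injective γ :=
    fun i j h => hβ'.inj (Subtype.ext h)
  have hess : ∀ i, Essential Λ (γ i) := by
    intro i
    show 3 ≤ essDeg Λ (γ i)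
    unfold essDeg
    rw [← Nat.card_coe_set_eq,
      ← Nat.card_congr (SimpleGraph.Subgraph.coeNeighborSetEquiv (e (β i))),
      Nat.card_coe_set_eq]
    exact hβ'.deg i
  have hnoness : ∀ x : Λ.verts, (Λ.coe.neighborSet x).ncard ≤ 2 → ¬ Essential Λ (x : V) := by
    intro x hx hcon
    have : 3 ≤ (Λ.neighborSet (x : V)).ncard := hcon
    rw [← Nat.card_coe_set_eq,
      ← Nat.card_congr (SimpleGraph.Subgraph.coeNeighborSetEquiv x),
      Nat.card_coe_set_eq] at this
    omega
  have hbr : ∀ i j : Fin 5, i ≠ j → ∃ p : G.Walk (γ i) (γ j), IsBranch Λ p := by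
    intro i j hij
    obtain ⟨p, hpath, hpos, hint⟩ := hβ'.branch i j hij
    refine ⟨p.map Λ.hom, ?_, ?_, ?_, hess i, hess j, ?_⟩
    · exact SimpleGraph.Walk.map_isPath_of_injective SimpleGraph.Subgraph.hom_injective hpath
    · have hl : 0 < (p.map Λ.hom).length := by rwa [SimpleGraph.Walk.length_map]
      exact hl
    · intro ed hed
      have hed : ed ∈ (p.map Λ.hom).edges := hed
      rw [SimpleGraph.Walk.edges_map, List.mem_map] at hed
      obtain ⟨ed', hed', rfl⟩ := hed
      have hmem : ed' ∈ Λ.coe.edgeSet := p.edges_subset_edgeSet hed'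
      revert hmem
      induction ed' using Sym2.ind with
      | _ x y =>
        intro hmem
        rw [SimpleGraph.mem_edgeSet] at hmem
        rw [Sym2.map_pair_eq]
        exact (SimpleGraph.Subgraph.mem_edgeSet).mpr ((SimpleGraph.Subgraph.coe_adj _ _ _).mp hmem)
    · intro v hv hvi hvj
      have hv : v ∈ (p.map Λ.hom).support := hv
      rw [SimpleGraph.Walk.support_map, List.mem_map] at hv
      obtain ⟨x, hx, rfl⟩ := hv
      have h2 := hint x hx (fun h => hvi (by rw [h]; rfl)) (fun h => hvj (by rw [h]; rfl))
      exact hnoness x h2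
  set m : Fin 5 → Fin 5 → Prop :=
    fun i j => ∃ p : G.Walk (γ i) (γ j), IsBranch Λ p ∧ 2 ≤ p.length with hm
  have adjof : ∀ i j : Fin 5, i ≠ j → ¬ m i j → G.Adj (γ i) (γ j) := by
    intro i j hij hmij
    obtain ⟨p, hb⟩ := hbr i j hij
    have hlen : p.length = 1 := by
      have h1 := hb.pos
      by_contra h
      exact hmij ⟨p, hb, by omega⟩
    exact SimpleGraph.Walk.adj_of_length_eq_one hlen
  have htri : ∀ i j k : Fin 5, i ≠ j → i ≠ k → j ≠ k → m i j ∨ m i k ∨ m j k := by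
    intro i j k hij hik hjk
    by_contra hcon
    push_neg at hcon
    obtain ⟨h1, h2, h3⟩ := hcon
    exact htf {γ i, γ j, γ k} (SimpleGraph.is3Clique_triple_iff.mpr
      ⟨adjof i j hij h1, adjof i k hik h2, adjof j k hjk h3⟩)
  obtain ⟨a, b, c, h1, h2, h3, h4, h5⟩ := K5Aux.core htri
  exact ⟨γ a, γ b, γ c, fun h => h1 (hginj h), fun h => h2 (hginj h), fun h => h3 (hginj h),
    hess a, hess b, hess c, h4, h5⟩
end
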